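/- Let p be an odd prime and let n, k be natural numbers with 0 < k < p, k \equiv n+1 \pmod 2 and n \ge k-1. Then d_p(n,k) > 0. -/

import Mathlib

/-- `binZ n j` is the binomial coefficient `n choose j` for `j : ℤ`, which is `0`
unless `0 ≤ j ≤ n`. -/
def binZ (n : ℕ) (j : ℤ) : ℤ := if 0 ≤ j then (n.choose j.toNat : ℤ) else 0

/-- `catC n j = C(n,j) = binom(n,j) - binom(n,j-1)`. -/
def catC (n : ℕ) (j : ℤ) : ℤ := binZ n j - binZ n (j - 1)

/-- `dP p n k = d_p(n,k) = ∑_{s ∈ ℤ} C(n, (n+1-k)/2 + s p)` when `k ≡ n+1 (mod 2)`,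
and `0` otherwise. -/
noncomputable def dP (p n k : ℕ) : ℤ :=
  if k % 2 = (n + 1) % 2 then ∑ᶠ s : ℤ, catC n (((n : ℤ) + 1 - k) / 2 + s * p) else 0


lemma binZ_of_neg {n : ℕ} {j : ℤ} (h : j < 0) : binZ n j = 0 := by
  simp [binZ, not_le.mpr h]

lemma binZ_of_gt {n : ℕ} {j : ℤ} (h : (n : ℤ) < j) : binZ n j = 0 := by
  have h0 : 0 ≤ j := le_trans (Int.ofNat_nonneg n) h.le
  have : n < j.toNat := by omega
  simp [binZ, h0, Nat.choose_eq_zero_of_lt this]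

lemma binZ_symm (n : ℕ) (j : ℤ) : binZ n ((n : ℤ) - j) = binZ n j := by
  rcases lt_or_ge j 0 with h | h
  · rw [binZ_of_neg h, binZ_of_gt (by omega)]
  rcases le_or_gt j n with h2 | h2
  · have h3 : (0:ℤ) ≤ (n:ℤ) - j := by omega
    have ht : ((n:ℤ) - j).toNat = n - j.toNat := by omega
    have hjn : j.toNat ≤ n := by omega
    simp [binZ, h, h3, ht, Nat.choose_symm hjn, not_lt.mpr h2]
  · rw [binZ_of_gt h2, binZ_of_neg (by omega)]

lemma catC_reflect (n : ℕ) (j : ℤ) : catC n ((n : ℤ) + 1 - j) = - catC n j := by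
  unfold catC
  have e1 : (n : ℤ) + 1 - j - 1 = (n : ℤ) - j := by ring
  have e2 : (n : ℤ) + 1 - j = (n : ℤ) - (j - 1) := by ring
  rw [e1, e2, binZ_symm, binZ_symm]
  ring

lemma binZ_pascal (n : ℕ) (j : ℤ) : binZ (n + 1) j = binZ n j + binZ n (j - 1) := by
  rcases lt_or_ge j 0 with h | h
  · rw [binZ_of_neg h, binZ_of_neg h, binZ_of_neg (by omega)]; ring
  rcases eq_or_lt_of_le h with h0 | h0
  · subst h0; norm_num [binZ]
  · obtain ⟨t, ht⟩ : ∃ t : ℕ, j.toNat = t + 1 := ⟨j.toNat - 1, by omega⟩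
    have h1 : (0:ℤ) ≤ j - 1 := by omega
    have h2 : (j - 1).toNat = t := by omega
    simp only [binZ, if_pos h, if_pos h1, ht, h2, Nat.choose_succ_succ]
    push_cast
    ring

lemma catC_pascal (n : ℕ) (j : ℤ) : catC (n + 1) j = catC n j + catC n (j - 1) := by
  unfold catC
  rw [binZ_pascal, binZ_pascal]
  ring

lemma catC_eq_zero {n : ℕ} {j : ℤ} (h : j < 0 ∨ (n : ℤ) + 1 < j) : catC n j = 0 := by
  unfold catC
  rcases h with h | h
  · rw [binZ_of_neg h, binZ_of_neg (by omega)]; ring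
  · rw [binZ_of_gt (by omega), binZ_of_gt (by omega)]; ring

lemma supp_finite (p : ℕ) (hp : 0 < p) (n : ℕ) (m : ℤ) :
    (Function.support fun s : ℤ => catC n (m + s * p)).Finite := by
  apply Set.Finite.subset (Set.Finite.preimage (f := fun s : ℤ => m + s * (p:ℤ))
    (Set.injOn_of_injective ?_) (Set.finite_Icc (0:ℤ) ((n:ℤ)+1)))
  · intro s hs
    simp only [Function.support, Set.mem_setOf_eq] at hs
    simp only [Set.mem_preimage, Set.mem_Icc]
    by_contra hc
    exact hs (catC_eq_zero (by omega))
  · intro a b hab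
    simp only at hab
    have : a * (p:ℤ) = b * p := by omega
    exact mul_right_cancel₀ (by exact_mod_cast hp.ne') this

lemma finsum_catC_zero (p : ℕ) (n : ℕ) (m c : ℤ) (hm : 2 * m = (n : ℤ) + 1 - c * p) :
    ∑ᶠ s : ℤ, catC n (m + s * p) = 0 := by
  set f : ℤ → ℤ := fun s => catC n (m + s * p) with hf
  have key : ∀ s : ℤ, f (c - s) = - f s := by
    intro s
    have e : m + (c - s) * p = (n : ℤ) + 1 - (m + s * p) := by linear_combination hm
    rw [hf]
    simp only
    rw [e, catC_reflect]
  have h1 : ∑ᶠ s : ℤ, f ((Equiv.subLeft c) s) = ∑ᶠ s, f s := finsum_comp_equiv _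
  have h2 : ∑ᶠ s : ℤ, f ((Equiv.subLeft c) s) = - ∑ᶠ s, f s := by
    calc ∑ᶠ s : ℤ, f ((Equiv.subLeft c) s) = ∑ᶠ s : ℤ, - f s := by
          exact finsum_congr fun s => by rw [Equiv.subLeft_apply, key s]
      _ = - ∑ᶠ s, f s := finsum_neg_distrib f
  linarith [h1, h2]

lemma dP_left (p : ℕ) (n : ℕ) : dP p n 0 = 0 := by
  unfold dP
  split_ifs with h
  · apply finsum_catC_zero p n _ 0
    simp only [Nat.cast_zero, zero_mul]
    omega
  · rfl

lemma dP_right (p : ℕ) (n : ℕ) : dP p n p = 0 := by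
  unfold dP
  split_ifs with h
  · apply finsum_catC_zero p n _ 1
    rw [one_mul]
    omega
  · rfl

lemma dP_rec (p : ℕ) (hp : 0 < p) (n k : ℕ) (hk : 1 ≤ k) (hpar : k % 2 = (n + 1 + 1) % 2) :
    dP p (n + 1) k = dP p n (k - 1) + dP p n (k + 1) := by
  have hp1 : (k - 1) % 2 = (n + 1) % 2 := by omega
  have hp2 : (k + 1) % 2 = (n + 1) % 2 := by omega
  rw [dP, if_pos hpar, dP, if_pos hp1, dP, if_pos hp2]
  set M : ℤ := (((n + 1 : ℕ) : ℤ) + 1 - k) / 2 with hM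
  have hMv : 2 * M = (n : ℤ) + 2 - k := by rw [hM]; push_cast; omega
  have e1 : ((n : ℤ) + 1 - ((k - 1 : ℕ) : ℤ)) / 2 = M := by
    have hc : ((k - 1 : ℕ) : ℤ) = (k : ℤ) - 1 := by omega
    rw [hc]; omega
  have e2 : ((n : ℤ) + 1 - ((k + 1 : ℕ) : ℤ)) / 2 = M - 1 := by push_cast; omega
  rw [e1, e2]
  have harg : ∀ s : ℤ, M + s * p - 1 = (M - 1) + s * p := fun s => by ring
  calc ∑ᶠ s : ℤ, catC (n + 1) (M + s * p)
      = ∑ᶠ s : ℤ, (catC n (M + s * p) + catC n ((M - 1) + s * p)) :=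
        finsum_congr fun s => by rw [catC_pascal, harg]
    _ = _ := finsum_add_distrib (supp_finite p hp n M) (supp_finite p hp n (M - 1))

lemma catC_zero_row (j : ℤ) : catC 0 j = if j = 0 then 1 else if j = 1 then -1 else 0 := by
  have hch : ∀ m : ℕ, (Nat.choose 0 m : ℤ) = if m = 0 then 1 else 0 := by
    intro m; cases m <;> simp
  unfold catC binZ
  split_ifs with h1 h2 h3 h4 h5 h6 h7 <;>
    simp_all [hch] <;> omega

lemma no_small_mult {p : ℕ} (s x : ℤ) (h : x = s * p) (h1 : 0 < x) (h2 : x < p) : False := by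
  have hd : (p : ℤ) ∣ x := ⟨s, by rw [h]; ring⟩
  have := Int.le_of_dvd h1 hd
  omega

lemma dP_base_one (p : ℕ) (hp : 2 ≤ p) : dP p 0 1 = 1 := by
  rw [dP, if_pos rfl]
  have e : (((0 : ℕ) : ℤ) + 1 - ((1 : ℕ) : ℤ)) / 2 = 0 := by norm_num
  rw [e]
  have h : ∀ s : ℤ, s ≠ 0 → catC 0 ((0 : ℤ) + s * p) = 0 := by
    intro s hs
    rw [catC_zero_row]
    have hs0 : (0 : ℤ) + s * p ≠ 0 := by
      intro h0
      have : s * (p : ℤ) = 0 := by omega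
      rcases mul_eq_zero.mp this with h | h
      · exact hs h
      · have : (p : ℤ) ≠ 0 := by exact_mod_cast (by omega : p ≠ 0)
        exact this h
    have hs1 : (0 : ℤ) + s * p ≠ 1 := by
      intro h1
      exact no_small_mult (p := p) s 1 (by omega) one_pos (by exact_mod_cast hp)
    rw [if_neg hs0, if_neg hs1]
  rw [finsum_eq_single _ 0 h]
  norm_num [catC_zero_row]

lemma dP_base_ge (p : ℕ) (hp : 3 ≤ p) (k : ℕ) (hk3 : 3 ≤ k) (hkp : k ≤ p)
    (hpar : k % 2 = 1) : dP p 0 k = 0 := by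
  rw [dP, if_pos hpar]
  apply finsum_eq_zero_of_forall_eq_zero
  intro s
  rw [catC_zero_row]
  set m : ℤ := (((0 : ℕ) : ℤ) + 1 - k) / 2 with hm
  have hmv : 2 * m = 1 - (k : ℤ) := by rw [hm]; push_cast; omega
  have h0 : m + s * p ≠ 0 := by
    intro h
    exact no_small_mult (p := p) s (-m) (by omega) (by omega) (by omega)
  have h1 : m + s * p ≠ 1 := by
    intro h
    exact no_small_mult (p := p) s (1 - m) (by omega) (by omega) (by omega)
  rw [if_neg h0, if_neg h1]

lemma dP_nonneg (p : ℕ) (hp : 3 ≤ p) : ∀ n, ∀ k, k ≤ p → 0 ≤ dP p n k := by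
  intro n
  induction n with
  | zero =>
    intro k hk
    by_cases hpar : k % 2 = 1
    · rcases eq_or_ne k 1 with rfl | hk1
      · rw [dP_base_one p (by omega)]; norm_num
      · rw [dP_base_ge p hp k (by omega) hk hpar]
    · rw [dP, if_neg (by omega)]
  | succ n ih =>
    intro k hk
    by_cases hpar : k % 2 = (n + 1 + 1) % 2
    · rcases Nat.eq_zero_or_pos k with rfl | hk0
      · rw [dP_left]
      rcases eq_or_ne k p with rfl | hkp
      · rw [dP_right]
      · rw [dP_rec p (by omega) n k hk0 hpar]
        have := ih (k - 1) (by omega)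
        have := ih (k + 1) (by omega)
        linarith
    · rw [dP, if_neg hpar]

lemma dP_pos_aux (p : ℕ) (hp3 : 3 ≤ p) :
    ∀ n k, 0 < k → k < p → k % 2 = (n + 1) % 2 → k - 1 ≤ n → 0 < dP p n k := by
  intro n
  induction n with
  | zero =>
    intro k hk0 hkp hpar hnk
    have hk1 : k = 1 := by omega
    subst hk1
    rw [dP_base_one p (by omega)]
    norm_num
  | succ n ih =>
    intro k hk0 hkp hpar hnk
    rcases eq_or_ne k 1 with rfl | hk1
    · rw [dP_rec p (by omega) n 1 le_rfl hpar]
      have h0 : dP p n 0 = 0 := dP_left p n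
      have h2 : 0 < dP p n 2 := ih 2 (by omega) (by omega) (by omega) (by omega)
      simp only [Nat.sub_self]  -- 1 - 1 = 0
      linarith
    · rw [dP_rec p (by omega) n k (by omega) hpar]
      have h1 : 0 < dP p n (k - 1) := ih (k - 1) (by omega) (by omega) (by omega) (by omega)
      have h2 : 0 ≤ dP p n (k + 1) := dP_nonneg p hp3 n (k + 1) (by omega)
      linarith

/-- For an odd prime `p` and `0 < k < p` with `k ≡ n+1 (mod 2)` and `n ≥ k-1`:
`d_p(n,k) > 0`. -/
theorem dP_pos (p : ℕ) (hp : p.Prime) (hodd : Odd p) (n k : ℕ)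
    (hk0 : 0 < k) (hkp : k < p) (hpar : k % 2 = (n + 1) % 2) (hnk : k - 1 ≤ n) :
    0 < dP p n k := by
  have hp2 := hp.two_le
  obtain ⟨m, hm⟩ := hodd
  exact dP_pos_aux p (by omega) n k hk0 hkp hpar hnk
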